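/- Let g:ℝ→(0,∞) be even, 2π-periodic, and strictly decreasing on [0,π]. For θ₁,θ₂∈(−π/4,π/4) define p = 1 − g(θ₁+θ₂−π/2)/g(θ₁−θ₂), q = 1 − g(θ₁+θ₂+π/2)/g(θ₁−θ₂), and c = 1 − (g(θ₁+θ₂−π/2) + g(θ₁+θ₂+π/2) − g(θ₁−θ₂+π))/g(θ₁−θ₂). Then c ≤ p, c ≤ q, and p+q−1 ≤ c. In particular, if c ≥ 0 then max(0, p+q−1) ≤ c ≤ min(p,q). -/

import Mathlib

open Real

/-- Let `g : ℝ → (0,∞)` be even, `2π`-periodic and strictly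
decreasing on `[0, π]`.  For `θ₁, θ₂ ∈ (-π/4, π/4)` and
`p = 1 - g(θ₁+θ₂-π/2)/g(θ₁-θ₂)`, `q = 1 - g(θ₁+θ₂+π/2)/g(θ₁-θ₂)`,
`c = 1 - (g(θ₁+θ₂-π/2) + g(θ₁+θ₂+π/2) - g(θ₁-θ₂+π))/g(θ₁-θ₂)`, one has
`c ≤ p`, `c ≤ q` and `p + q - 1 ≤ c`; in particular if `c ≥ 0` then
`max(0, p+q-1) ≤ c ≤ min(p,q)`. -/
theorem statement_14 (g : ℝ → ℝ) (hpos : ∀ s, 0 < g s) (heven : ∀ s, g (-s) = g s)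
    (hper : Function.Periodic g (2 * π)) (hanti : StrictAntiOn g (Set.Icc 0 π))
    (θ₁ θ₂ : ℝ) (h₁ : θ₁ ∈ Set.Ioo (-(π / 4)) (π / 4)) (h₂ : θ₂ ∈ Set.Ioo (-(π / 4)) (π / 4))
    (p q c : ℝ)
    (hpdef : p = 1 - g (θ₁ + θ₂ - π / 2) / g (θ₁ - θ₂))
    (hqdef : q = 1 - g (θ₁ + θ₂ + π / 2) / g (θ₁ - θ₂))
    (hcdef : c = 1 - (g (θ₁ + θ₂ - π / 2) + g (θ₁ + θ₂ + π / 2) - g (θ₁ - θ₂ + π))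
        / g (θ₁ - θ₂)) :
    c ≤ p ∧ c ≤ q ∧ p + q - 1 ≤ c ∧ (0 ≤ c → max 0 (p + q - 1) ≤ c ∧ c ≤ min p q) := by
  obtain ⟨h1l, h1r⟩ := h₁
  obtain ⟨h2l, h2r⟩ := h₂
  have hπ := Real.pi_pos
  have hDpos : 0 < g (θ₁ - θ₂) := hpos _
  have anti := hanti.antitoneOn
  -- rewrite g(θ₁-θ₂+π) as g(π - |θ₁-θ₂|)
  have hE : g (θ₁ - θ₂ + π) = g (π - |θ₁ - θ₂|) := by
    rcases abs_cases (θ₁ - θ₂) with ⟨h, hx⟩ | ⟨h, hx⟩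
    · rw [h]
      have e1 := heven (θ₁ - θ₂ + π)
      have e2 := hper (-(θ₁ - θ₂ + π))
      have e3 : -(θ₁ - θ₂ + π) + 2 * π = π - (θ₁ - θ₂) := by ring
      rw [e3] at e2
      rw [← e1, ← e2]
    · rw [h]
      ring_nf
  -- rewrite g(θ₁+θ₂-π/2) as g(π/2 - (θ₁+θ₂))
  have hA : g (θ₁ + θ₂ - π / 2) = g (π / 2 - (θ₁ + θ₂)) := by
    have := heven (θ₁ + θ₂ - π / 2)
    rw [show -(θ₁ + θ₂ - π / 2) = π / 2 - (θ₁ + θ₂) by ring] at this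
    exact this.symm
  have habs : |θ₁ - θ₂| < π / 2 := by
    rcases abs_cases (θ₁ - θ₂) with ⟨h, _⟩ | ⟨h, _⟩ <;> rw [h] <;> linarith
  have habs0 : 0 ≤ |θ₁ - θ₂| := abs_nonneg _
  -- key inequalities
  have hle1 : g (π - |θ₁ - θ₂|) ≤ g (θ₁ + θ₂ + π / 2) := by
    apply anti (Set.mem_Icc.2 ⟨by linarith, by linarith⟩)
      (Set.mem_Icc.2 ⟨by linarith, by linarith⟩)
    rcases abs_cases (θ₁ - θ₂) with ⟨h, _⟩ | ⟨h, _⟩ <;> rw [h] <;> linarith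
  have hle2 : g (π - |θ₁ - θ₂|) ≤ g (π / 2 - (θ₁ + θ₂)) := by
    apply anti (Set.mem_Icc.2 ⟨by linarith, by linarith⟩)
      (Set.mem_Icc.2 ⟨by linarith, by linarith⟩)
    rcases abs_cases (θ₁ - θ₂) with ⟨h, _⟩ | ⟨h, _⟩ <;> rw [h] <;> linarith
  have hEpos : 0 < g (θ₁ - θ₂ + π) := hpos _
  have hcp : c ≤ p := by
    rw [hpdef, hcdef, sub_le_sub_iff_left, div_le_div_iff₀ hDpos hDpos]
    rw [hE, hA] at *
    nlinarith [hle1, hDpos.le]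
  have hcq : c ≤ q := by
    rw [hqdef, hcdef, sub_le_sub_iff_left, div_le_div_iff₀ hDpos hDpos]
    rw [hE, hA] at *
    nlinarith [hle2, hDpos.le]
  have hpqc : p + q - 1 ≤ c := by
    rw [hpdef, hqdef, hcdef]
    have h1 : (g (θ₁ + θ₂ - π / 2) + g (θ₁ + θ₂ + π / 2) - g (θ₁ - θ₂ + π)) / g (θ₁ - θ₂)
        ≤ g (θ₁ + θ₂ - π / 2) / g (θ₁ - θ₂) + g (θ₁ + θ₂ + π / 2) / g (θ₁ - θ₂) := by
      rw [← add_div, div_le_div_iff₀ hDpos hDpos]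
      nlinarith [hEpos, hDpos.le]
    linarith
  exact ⟨hcp, hcq, hpqc, fun h0 => ⟨max_le h0 hpqc, le_min hcp hcq⟩⟩
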